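/- Let K be a field and A a commutative K-algebra of dimension n having an element t such that (1, t, …, t^{n−1}) is a K-basis of A. Then for all integers r, s, u ≥ 1 with n ≥ ru + s and n ≥ su + r, there exist K-subspaces U ⊆ A with dim U = u, Y ⊆ A with dim Y = s, and X ⊆ A* with dim X = r, such that φ(y·u') = 0 for all φ ∈ X, y ∈ Y, u' ∈ U, and such that dim(Y·U) = su and dim(U·X) = ru (the largest possible values). -/

import Mathlib

noncomputable section StmtAux

variable (K : Type*) [Field K] (A : Type*) [CommRing A] [Algebra K A]

noncomputable def stmtPhi (f : Module.Dual K A) : A →ₗ[K] Module.Dual K A where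
  toFun a := f ∘ₗ LinearMap.mulRight K a
  map_add' a a' := by ext x; simp [mul_add]
  map_smul' c a := by ext x; simp [mul_smul_comm]

@[simp] lemma stmtPhi_apply (f : Module.Dual K A) (a x : A) :
    stmtPhi K A f a x = f (x * a) := rfl

end StmtAux

theorem stmtPhi_ker (K : Type*) [Field K] (A : Type*) [CommRing A] [Algebra K A]
    (n : ℕ) (t : A) (b : Module.Basis (Fin n) K A) (hb : ∀ i : Fin n, b i = t ^ (i : ℕ))
    (hn : 0 < n) :
    LinearMap.ker (stmtPhi K A (b.coord ⟨n-1, by omega⟩)) = ⊥ := by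
  set φN : Module.Dual K A := b.coord ⟨n-1, by omega⟩ with hφN
  have hcoord : ∀ e : ℕ, (he : e < n) → φN (t ^ e) = if e = n - 1 then 1 else 0 := by
    intro e he
    have h1 : t ^ e = b ⟨e, he⟩ := by
      have := hb ⟨e, he⟩; simpa using this.symm
    rw [h1, hφN, Module.Basis.coord_apply, b.repr_self_apply]
    by_cases h : e = n - 1
    · rw [if_pos (by simp [Fin.ext_iff]; omega), if_pos h]
    · rw [if_neg (by simp [Fin.ext_iff]; omega), if_neg h]
  apply LinearMap.ker_eq_bot'.mpr
  intro a ha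
  by_contra h0
  have hS : (b.repr a).support.Nonempty := by
    rw [Finsupp.support_nonempty_iff]
    intro h
    exact h0 (by simpa using congrArg b.repr.symm h)
  set S := (b.repr a).support with hSdef
  set m0 := S.max' hS with hm0def
  have hm0 : m0 ∈ S := S.max'_mem hS
  have hmax : ∀ m ∈ S, m ≤ m0 := fun m hm => S.le_max' m hm
  set p := n - 1 - (m0 : ℕ) with hp
  have ha' : ∑ m ∈ S, b.repr a m • b m = a := by
    conv_rhs => rw [← b.sum_repr a]
    exact Finset.sum_subset S.subset_univ
      (fun m _ hm => by simp [Finsupp.notMem_support_iff.mp hm])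
  have term_eq : ∀ m ∈ S, φN (t ^ p * (b.repr a m • b m)) =
      if m = m0 then b.repr a m0 else 0 := by
    intro m hm
    have hmle : (m : ℕ) ≤ (m0 : ℕ) := hmax m hm
    have h1 : t ^ p * (b.repr a m • b m) = b.repr a m • t ^ (p + (m:ℕ)) := by
      rw [hb m, mul_smul_comm, ← pow_add]
    rw [h1, map_smul, hcoord _ (by have := m0.isLt; omega)]
    by_cases h : m = m0
    · subst h
      rw [if_pos rfl, if_pos (by have := m0.isLt; omega)]
      simp
    · have : (m : ℕ) < (m0 : ℕ) := by
        rcases hmle.lt_or_eq with h' | h'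
        · exact h'
        · exact absurd (Fin.ext h') h
      rw [if_neg h, if_neg (by have := m0.isLt; omega)]
      simp
  have hval : φN (t ^ p * a) = b.repr a m0 := by
    conv_lhs => rw [← ha', Finset.mul_sum]
    rw [map_sum, Finset.sum_congr rfl term_eq, Finset.sum_ite_eq' S m0]
    simp [hm0]
  have hzero : φN (t ^ p * a) = 0 := by
    have := LinearMap.congr_fun ha (t ^ p)
    simpa using this
  rw [hval] at hzero
  exact (Finsupp.mem_support_iff.mp hm0) hzero

theorem stmt_li_pow (K : Type*) [Field K] (A : Type*) [CommRing A] [Algebra K A]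
    (n : ℕ) (t : A) (b : Module.Basis (Fin n) K A) (hb : ∀ i : Fin n, b i = t ^ (i : ℕ))
    {ι : Type*} [Fintype ι] (E : ι → ℕ) (hinj : Function.Injective E)
    (hlt : ∀ i, E i < n) : LinearIndependent K (fun i => t ^ E i) := by
  have h := b.linearIndependent.comp (fun i => (⟨E i, hlt i⟩ : Fin n))
    (fun i i' h => hinj (by simpa [Fin.ext_iff] using h))
  have he : (fun i => t ^ E i) = b ∘ (fun i => (⟨E i, hlt i⟩ : Fin n)) := by
    funext i
    simp [hb ⟨E i, hlt i⟩]
  rw [he]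
  exact h

theorem stmt_li_phi (K : Type*) [Field K] (A : Type*) [CommRing A] [Algebra K A]
    (n : ℕ) (t : A) (b : Module.Basis (Fin n) K A) (hb : ∀ i : Fin n, b i = t ^ (i : ℕ))
    (hn : 0 < n) {ι : Type*} [Fintype ι] (E : ι → ℕ) (hinj : Function.Injective E)
    (hlt : ∀ i, E i < n) :
    LinearIndependent K (fun i => stmtPhi K A (b.coord ⟨n-1, by omega⟩) (t ^ E i)) :=
  (stmt_li_pow K A n t b hb E hinj hlt).map'
    (stmtPhi K A (b.coord ⟨n-1, by omega⟩)) (stmtPhi_ker K A n t b hb hn)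

theorem stmt_add_mul_inj {a j j' i i' : ℕ} (ha : 0 < a) (hj : j < a) (hj' : j' < a)
    (h : j + i * a = j' + i' * a) : j = j' ∧ i = i' := by
  have h1 : (j + i * a) / a = i := by
    rw [Nat.add_mul_div_right _ _ ha, Nat.div_eq_of_lt hj]; omega
  have h2 : (j' + i' * a) / a = i' := by
    rw [Nat.add_mul_div_right _ _ ha, Nat.div_eq_of_lt hj']; omega
  have hii : i = i' := by rw [← h1, ← h2, h]
  subst hii
  exact ⟨by omega, rfl⟩

open scoped Pointwise

/-- A monogenic commutative `K`-algebra `A` of dimension `n` (with power basis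
`(1, t, …, t^{n-1})`) possesses good subspaces of every dimension: for all `r, s, u ≥ 1`
with `n ≥ ru + s` and `n ≥ su + r`, there are subspaces `U ⊆ A`, `Y ⊆ A`, `X ⊆ A*` of
dimensions `u`, `s`, `r` with `φ(y·u') = 0` for all `φ ∈ X`, `y ∈ Y`, `u' ∈ U`, and with
`dim (Y·U) = su` and `dim (U·X) = ru`, the largest possible values. Here `Y·U` is the span
of the products `y·u'` and `U·X` is the span of the functionals `a ↦ φ(a·u')`. -/
theorem stmt_2 (K : Type*) [Field K] (A : Type*) [CommRing A] [Algebra K A]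
    (n : ℕ) (t : A) (b : Module.Basis (Fin n) K A) (hb : ∀ i : Fin n, b i = t ^ (i : ℕ)) :
    ∀ r s u : ℕ, 1 ≤ r → 1 ≤ s → 1 ≤ u → r * u + s ≤ n → s * u + r ≤ n →
    ∃ (U Y : Submodule K A) (X : Submodule K (Module.Dual K A)),
      Module.finrank K ↥U = u ∧ Module.finrank K ↥Y = s ∧ Module.finrank K ↥X = r ∧
      (∀ φ ∈ X, ∀ y ∈ Y, ∀ v ∈ U, φ (y * v) = 0) ∧
      Module.finrank K ↥(Y * U) = s * u ∧
      Module.finrank K ↥(Submodule.span K {ψ : Module.Dual K A |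
        ∃ φ ∈ X, ∃ v ∈ U, ψ = φ ∘ₗ (LinearMap.mulRight K v)}) = r * u := by
  intro r s u hr hs hu h1 h2
  obtain ⟨u0, rfl⟩ : ∃ u0, u = u0 + 1 := ⟨u - 1, by omega⟩
  set α := max r s with hαdef
  have hα0 : 0 < α := by omega
  have hαr : r ≤ α := le_max_left r s
  have hαs : s ≤ α := le_max_right r s
  have hle : r + s + u0 * α ≤ n := by
    rcases max_choice r s with h | h
    · have : r + s + u0 * r = r * (u0 + 1) + s := by ring
      rw [hαdef, h, this]; exact h1
    · have : r + s + u0 * s = s * (u0 + 1) + r := by ring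
      rw [hαdef, h, this]; exact h2
  obtain ⟨c, hc⟩ := Nat.exists_eq_add_of_le hle
  have hn : 0 < n := by omega
  set φN : Module.Dual K A := b.coord ⟨n - 1, by omega⟩ with hφNdef
  set Φ : A →ₗ[K] Module.Dual K A := stmtPhi K A φN with hΦdef
  have hφ0 : ∀ e : ℕ, e < n - 1 → φN (t ^ e) = 0 := by
    intro e he
    have h1' : t ^ e = b ⟨e, by omega⟩ := by
      have := hb ⟨e, by omega⟩; simpa using this.symm
    rw [h1', hφNdef, Module.Basis.coord_apply, b.repr_self_apply,
      if_neg (by simp [Fin.ext_iff]; omega)]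
  have hiα : ∀ i : Fin (u0 + 1), (i : ℕ) * α ≤ u0 * α :=
    fun i => Nat.mul_le_mul_right α (by omega)
  set vU : Fin (u0 + 1) → A := fun i => t ^ ((i : ℕ) * α) with hvU
  set vY : Fin s → A := fun j => t ^ (j : ℕ) with hvY
  set vX : Fin r → Module.Dual K A := fun z => Φ (t ^ (c + (z : ℕ))) with hvX
  set vYU : Fin s × Fin (u0 + 1) → A :=
    fun p => t ^ ((p.1 : ℕ) + (p.2 : ℕ) * α) with hvYU
  set vXU : Fin r × Fin (u0 + 1) → Module.Dual K A :=
    fun p => Φ (t ^ (c + (p.1 : ℕ) + (p.2 : ℕ) * α)) with hvXU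
  -- linear independence facts
  have liU : LinearIndependent K vU := by
    apply stmt_li_pow K A n t b hb
    · intro i i' h
      exact Fin.ext (Nat.eq_of_mul_eq_mul_right hα0 h)
    · intro i; have := hiα i; omega
  have liY : LinearIndependent K vY := by
    apply stmt_li_pow K A n t b hb
    · exact fun j j' h => Fin.ext h
    · intro j; have := j.isLt; omega
  have liX : LinearIndependent K vX := by
    apply stmt_li_phi K A n t b hb hn
    · intro z z' h
      simp only at h
      exact Fin.ext (by omega)
    · intro z; have := z.isLt; omega
  have liYU : LinearIndependent K vYU := by
    apply stmt_li_pow K A n t b hb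
    · rintro ⟨j, i⟩ ⟨j', i'⟩ h
      obtain ⟨hj, hi⟩ := stmt_add_mul_inj hα0
        (by omega : (j : ℕ) < α) (by omega : (j' : ℕ) < α) h
      simp only [Prod.mk.injEq]
      exact ⟨Fin.ext hj, Fin.ext hi⟩
    · rintro ⟨j, i⟩
      have := hiα i; have := j.isLt
      simp only
      omega
  have liXU : LinearIndependent K vXU := by
    apply stmt_li_phi K A n t b hb hn
    · rintro ⟨z, i⟩ ⟨z', i'⟩ h
      simp only at h
      have h' : ((z : ℕ) + (i : ℕ) * α) = ((z' : ℕ) + (i' : ℕ) * α) := by omega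
      obtain ⟨hz, hi⟩ := stmt_add_mul_inj hα0
        (by omega : (z : ℕ) < α) (by omega : (z' : ℕ) < α) h'
      simp only [Prod.mk.injEq]
      exact ⟨Fin.ext hz, Fin.ext hi⟩
    · rintro ⟨z, i⟩
      have := hiα i; have := z.isLt
      simp only
      omega
  refine ⟨Submodule.span K (Set.range vU), Submodule.span K (Set.range vY),
    Submodule.span K (Set.range vX), ?_, ?_, ?_, ?_, ?_, ?_⟩
  · rw [finrank_span_eq_card liU]; simp
  · rw [finrank_span_eq_card liY]; simp
  · rw [finrank_span_eq_card liX]; simp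
  · -- orthogonality
    have orth1 : ∀ (z : Fin r) (j : Fin s), ∀ v ∈ Submodule.span K (Set.range vU),
        vX z (t ^ (j : ℕ) * v) = 0 := by
      intro z j v hv
      induction hv using Submodule.span_induction with
      | mem x hx =>
          obtain ⟨i, rfl⟩ := hx
          have hi := hiα i
          have hjlt := j.isLt
          have hzlt := z.isLt
          show Φ (t ^ (c + (z : ℕ))) (t ^ (j : ℕ) * t ^ ((i : ℕ) * α)) = 0
          rw [hΦdef, stmtPhi_apply, ← pow_add, ← pow_add]
          exact hφ0 _ (by omega)
      | zero => rw [mul_zero, map_zero]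
      | add x y hx hy px py => rw [mul_add, map_add, px, py, add_zero]
      | smul a x hx px => rw [mul_smul_comm, map_smul, px, smul_zero]
    have orth2 : ∀ (z : Fin r), ∀ y ∈ Submodule.span K (Set.range vY),
        ∀ v ∈ Submodule.span K (Set.range vU), vX z (y * v) = 0 := by
      intro z y hy
      induction hy using Submodule.span_induction with
      | mem x hx =>
          obtain ⟨j, rfl⟩ := hx
          exact orth1 z j
      | zero => intro v hv; rw [zero_mul, map_zero]
      | add x y hx hy px py =>
          intro v hv; rw [add_mul, map_add, px v hv, py v hv, add_zero]
      | smul a x hx px =>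
          intro v hv; rw [smul_mul_assoc, map_smul, px v hv, smul_zero]
    intro φ hφ
    induction hφ using Submodule.span_induction with
    | mem x hx =>
        obtain ⟨z, rfl⟩ := hx
        exact orth2 z
    | zero => intro y _ v _; rfl
    | add x y hx hy px py =>
        intro y' hy' v hv
        rw [LinearMap.add_apply, px y' hy' v hv, py y' hy' v hv, add_zero]
    | smul a x hx px =>
        intro y hy v hv
        rw [LinearMap.smul_apply, px y hy v hv, smul_zero]
  · -- finrank (Y * U) = s * u
    have hset : Set.range vY * Set.range vU = Set.range vYU := by
      ext x
      simp only [Set.mem_mul, Set.mem_range]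
      constructor
      · rintro ⟨y, ⟨j, rfl⟩, v, ⟨i, rfl⟩, rfl⟩
        exact ⟨(j, i), pow_add t _ _⟩
      · rintro ⟨⟨j, i⟩, rfl⟩
        exact ⟨t ^ (j : ℕ), ⟨j, rfl⟩, t ^ ((i : ℕ) * α), ⟨i, rfl⟩, (pow_add t _ _).symm⟩
    rw [Submodule.span_mul_span, hset, finrank_span_eq_card liYU]
    simp
  · -- finrank (span U·X) = r * u
    have hcomp : ∀ (e : ℕ) (i : Fin (u0 + 1)),
        (Φ (t ^ e)) ∘ₗ LinearMap.mulRight K (vU i) = Φ (t ^ (e + (i : ℕ) * α)) := by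
      intro e i
      ext x
      simp only [hΦdef, hvU, LinearMap.comp_apply, LinearMap.mulRight_apply,
        stmtPhi_apply]
      rw [mul_assoc, ← pow_add, Nat.add_comm ((i : ℕ) * α) e]
    have hXU : Submodule.span K {ψ : Module.Dual K A |
        ∃ φ ∈ Submodule.span K (Set.range vX), ∃ v ∈ Submodule.span K (Set.range vU),
          ψ = φ ∘ₗ (LinearMap.mulRight K v)} = Submodule.span K (Set.range vXU) := by
      apply le_antisymm
      · rw [Submodule.span_le]
        rintro ψ ⟨φ, hφ, v, hv, rfl⟩
        have step1 : ∀ z : Fin r, ∀ v' ∈ Submodule.span K (Set.range vU),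
            (vX z) ∘ₗ LinearMap.mulRight K v' ∈ Submodule.span K (Set.range vXU) := by
          intro z v' hv'
          induction hv' using Submodule.span_induction with
          | mem x hx =>
              obtain ⟨i, rfl⟩ := hx
              show Φ (t ^ (c + (z : ℕ))) ∘ₗ LinearMap.mulRight K (vU i)
                ∈ Submodule.span K (Set.range vXU)
              rw [hcomp]
              exact Submodule.subset_span ⟨(z, i), rfl⟩
          | zero =>
              have h0 : (vX z) ∘ₗ LinearMap.mulRight K (0 : A) = 0 := by
                ext w; simp
              rw [h0]; exact zero_mem _
          | add x y hx hy px py =>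
              have hadd : (vX z) ∘ₗ LinearMap.mulRight K (x + y)
                  = (vX z) ∘ₗ LinearMap.mulRight K x + (vX z) ∘ₗ LinearMap.mulRight K y := by
                ext w; simp [mul_add]
              rw [hadd]; exact add_mem px py
          | smul a x hx px =>
              have hsmul : (vX z) ∘ₗ LinearMap.mulRight K (a • x)
                  = a • ((vX z) ∘ₗ LinearMap.mulRight K x) := by
                ext w; simp [mul_smul_comm]
              rw [hsmul]; exact Submodule.smul_mem _ a px
        induction hφ using Submodule.span_induction with
        | mem x hx =>
            obtain ⟨z, rfl⟩ := hx
            exact step1 z v hv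
        | zero => rw [LinearMap.zero_comp]; exact zero_mem _
        | add x y hx hy px py => rw [LinearMap.add_comp]; exact add_mem px py
        | smul a x hx px => rw [LinearMap.smul_comp]; exact Submodule.smul_mem _ a px
      · rw [Submodule.span_le]
        rintro ψ ⟨⟨z, i⟩, rfl⟩
        refine Submodule.subset_span ⟨vX z, Submodule.subset_span ⟨z, rfl⟩, vU i,
          Submodule.subset_span ⟨i, rfl⟩, ?_⟩
        show Φ (t ^ (c + (z : ℕ) + (i : ℕ) * α))
          = Φ (t ^ (c + (z : ℕ))) ∘ₗ LinearMap.mulRight K (vU i)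
        rw [hcomp]
    rw [hXU, finrank_span_eq_card liXU]
    simp
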